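/- Let Y_1, …, Y_N be independent real random variables on a probability space, where Y_i is distributed according to the Laplace measure with location 0 and scale b_i > 0. Let B = Σ_i b_i² and let ω ∈ (0, e^{−2}] satisfy ln(1/ω) · max_i b_i ≤ √B. Then P(|Σ_{i=1}^N Y_i| ≥ ln(1/ω)·√(8B)) ≤ ω. -/

import Mathlib

open MeasureTheory ProbabilityTheory

/-- The Laplace density with location `μ` and scale `b`. -/
noncomputable def laplaceDensity (μ b : ℝ) (x : ℝ) : ℝ :=
  (1 / (2 * b)) * Real.exp (-|x - μ| / b)

/-- The Laplace measure with location `μ` and scale `b`: the measure on `ℝ` whose density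
with respect to Lebesgue measure is the Laplace density. -/
noncomputable def laplaceMeasure (μ b : ℝ) : Measure ℝ :=
  volume.withDensity (fun x => ENNReal.ofReal (laplaceDensity μ b x))

open Real Set
open scoped ENNReal NNReal

lemma measurable_laplaceDensity (μ b : ℝ) : Measurable (laplaceDensity μ b) := by
  unfold laplaceDensity
  fun_prop

lemma laplaceDensity_nonneg (μ b : ℝ) (hb : 0 < b) (x : ℝ) : 0 ≤ laplaceDensity μ b x := by
  unfold laplaceDensity
  positivity

lemma integral_exp_neg_mul_Ioi' {c : ℝ} (hc : 0 < c) :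
    ∫ x in Ioi (0:ℝ), Real.exp (-(c * x)) = 1 / c := by
  have h := integral_comp_mul_left_Ioi (fun x => Real.exp (-x)) 0 hc
  simp only [mul_zero, integral_exp_neg_Ioi, neg_zero, Real.exp_zero, smul_eq_mul, mul_one] at h
  rw [h]
  rw [one_div]

lemma integral_exp_mul_Iic' {c : ℝ} (hc : 0 < c) :
    ∫ x in Iic (0:ℝ), Real.exp (c * x) = 1 / c := by
  have h := integral_comp_neg_Iic (0:ℝ) (fun x => Real.exp (-(c * x)))
  simp only [neg_zero, mul_neg, neg_neg] at h
  rw [h, integral_exp_neg_mul_Ioi' hc]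

lemma integrableOn_exp_mul_Iic' {c : ℝ} (hc : 0 < c) :
    IntegrableOn (fun x => Real.exp (c * x)) (Iic (0:ℝ)) := by
  have h := integrableOn_exp_Iic (0:ℝ)
  have h' : Integrable ((Iic (0:ℝ)).indicator Real.exp) volume :=
    (integrable_indicator_iff measurableSet_Iic).mpr h
  have h2 := (integrable_comp_mul_left_iff ((Iic (0:ℝ)).indicator Real.exp) hc.ne').mpr h'
  refine (integrable_indicator_iff measurableSet_Iic).mp (h2.congr (ae_of_all _ fun x => ?_))
  by_cases hx : x ≤ 0
  · have hcx : c * x ≤ 0 := mul_nonpos_of_nonneg_of_nonpos hc.le hx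
    simp [indicator, hx, hcx]
  · have hcx : ¬ (c * x ≤ 0) := by
      push_neg at hx ⊢
      exact mul_pos hc hx
    simp [indicator, hx, hcx]

lemma laplace_aux {b t : ℝ} (hb : 0 < b) (ht : |t| * b < 1) :
    Integrable (fun x => laplaceDensity 0 b x * Real.exp (t * x)) volume ∧
      ∫ x, laplaceDensity 0 b x * Real.exp (t * x) = 1 / (1 - t ^ 2 * b ^ 2) := by
  have hb' : b ≠ 0 := hb.ne'
  have ht1 : t < 1 / b := by
    rcases abs_lt.mp ((lt_div_iff₀ hb).mpr ht) with ⟨_, h⟩; exact h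
  have ht2 : -(1 / b) < t := by
    rcases abs_lt.mp ((lt_div_iff₀ hb).mpr ht) with ⟨h, _⟩; exact h
  set c₁ : ℝ := 1 / b - t with hc₁
  set c₂ : ℝ := 1 / b + t with hc₂
  have hc₁pos : 0 < c₁ := by rw [hc₁]; linarith
  have hc₂pos : 0 < c₂ := by rw [hc₂]; linarith
  have heq₁ : ∀ x ∈ Ioi (0:ℝ),
      laplaceDensity 0 b x * Real.exp (t * x) = (1 / (2 * b)) * Real.exp (-(c₁ * x)) := by
    intro x hx
    have hx' : (0:ℝ) ≤ x := (mem_Ioi.mp hx).le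
    unfold laplaceDensity
    rw [mul_assoc, ← Real.exp_add, sub_zero, abs_of_nonneg hx']
    congr 2
    rw [hc₁]; ring
  have heq₂ : ∀ x ∈ Iic (0:ℝ),
      laplaceDensity 0 b x * Real.exp (t * x) = (1 / (2 * b)) * Real.exp (c₂ * x) := by
    intro x hx
    have hx' : x ≤ 0 := mem_Iic.mp hx
    unfold laplaceDensity
    rw [mul_assoc, ← Real.exp_add, sub_zero, abs_of_nonpos hx']
    congr 2
    rw [hc₂]; ring
  have hI₁ : IntegrableOn (fun x => laplaceDensity 0 b x * Real.exp (t * x)) (Ioi 0) := by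
    have base : IntegrableOn (fun x => (1 / (2 * b)) * Real.exp (-(c₁ * x))) (Ioi 0) := by
      have := (exp_neg_integrableOn_Ioi 0 hc₁pos).const_mul (1 / (2 * b))
      exact this.congr (ae_of_all _ fun x => by ring_nf)
    exact IntegrableOn.congr_fun base (fun x hx => (heq₁ x hx).symm) measurableSet_Ioi
  have hI₂ : IntegrableOn (fun x => laplaceDensity 0 b x * Real.exp (t * x)) (Iic 0) := by
    have base : IntegrableOn (fun x => (1 / (2 * b)) * Real.exp (c₂ * x)) (Iic 0) :=
      (integrableOn_exp_mul_Iic' hc₂pos).const_mul (1 / (2 * b))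
    exact IntegrableOn.congr_fun base (fun x hx => (heq₂ x hx).symm) measurableSet_Iic
  have hint : Integrable (fun x => laplaceDensity 0 b x * Real.exp (t * x)) volume := by
    have h2 := hI₂.union hI₁
    rw [Iic_union_Ioi] at h2
    exact integrableOn_univ.mp h2
  refine ⟨hint, ?_⟩
  have hsplit : ∫ x, laplaceDensity 0 b x * Real.exp (t * x) =
      (∫ x in Iic (0:ℝ), laplaceDensity 0 b x * Real.exp (t * x)) +
      ∫ x in Ioi (0:ℝ), laplaceDensity 0 b x * Real.exp (t * x) := by
    rw [← setIntegral_union (Iic_disjoint_Ioi le_rfl) measurableSet_Ioi hI₂ hI₁, Iic_union_Ioi,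
      Measure.restrict_univ]
  rw [hsplit]
  rw [setIntegral_congr_fun measurableSet_Ioi heq₁, setIntegral_congr_fun measurableSet_Iic heq₂]
  rw [integral_const_mul, integral_const_mul, integral_exp_neg_mul_Ioi' hc₁pos,
    integral_exp_mul_Iic' hc₂pos]
  have hc₁' : 1 / b - t ≠ 0 := by rw [← hc₁]; exact hc₁pos.ne'
  have hc₂' : 1 / b + t ≠ 0 := by rw [← hc₂]; exact hc₂pos.ne'
  have htb : |t * b| < 1 := by rwa [abs_mul, abs_of_pos hb]
  obtain ⟨htb1, htb2⟩ := abs_lt.mp htb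
  have h2 : (1:ℝ) - t * b ≠ 0 := (by linarith : (0:ℝ) < 1 - t * b).ne'
  have h3 : (1:ℝ) + t * b ≠ 0 := (by linarith : (0:ℝ) < 1 + t * b).ne'
  have e1 : 1 / (1 / b - t) = b / (1 - t * b) := by
    rw [div_eq_div_iff hc₁' h2]
    field_simp
  have e2 : 1 / (1 / b + t) = b / (1 + t * b) := by
    rw [div_eq_div_iff hc₂' h3]
    field_simp
  have h4 : (1:ℝ) - t ^ 2 * b ^ 2 ≠ 0 := by
    have : (1:ℝ) - t ^ 2 * b ^ 2 = (1 - t * b) * (1 + t * b) := by ring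
    rw [this]
    exact mul_ne_zero h2 h3
  rw [hc₁, hc₂, e1, e2]
  have h2' : (1:ℝ) - b * t ≠ 0 := by rwa [mul_comm]
  have h3' : (1:ℝ) + b * t ≠ 0 := by rwa [mul_comm]
  have h4' : (1:ℝ) - b ^ 2 * t ^ 2 ≠ 0 := by rwa [mul_comm]
  field_simp
  ring

lemma laplaceMeasure_eq (b : ℝ) : laplaceMeasure 0 b =
    volume.withDensity fun x => ((laplaceDensity 0 b x).toNNReal : ℝ≥0∞) := rfl

lemma laplaceMeasure_integrable_exp {b t : ℝ} (hb : 0 < b) (ht : |t| * b < 1) :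
    Integrable (fun x => Real.exp (t * x)) (laplaceMeasure 0 b) := by
  have hd : Measurable fun x => (laplaceDensity 0 b x).toNNReal :=
    (measurable_laplaceDensity 0 b).real_toNNReal
  rw [laplaceMeasure_eq, integrable_withDensity_iff_integrable_smul hd]
  refine ((laplace_aux hb ht).1.congr (ae_of_all _ fun x => ?_))
  simp [NNReal.smul_def, Real.coe_toNNReal _ (laplaceDensity_nonneg 0 b hb x)]

lemma laplaceMeasure_integral_exp {b t : ℝ} (hb : 0 < b) (ht : |t| * b < 1) :
    ∫ x, Real.exp (t * x) ∂(laplaceMeasure 0 b) = 1 / (1 - t ^ 2 * b ^ 2) := by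
  have hd : Measurable fun x => (laplaceDensity 0 b x).toNNReal :=
    (measurable_laplaceDensity 0 b).real_toNNReal
  rw [laplaceMeasure_eq, integral_withDensity_eq_integral_smul hd, ← (laplace_aux hb ht).2]
  refine integral_congr_ae (ae_of_all _ fun x => ?_)
  simp [NNReal.smul_def, Real.coe_toNNReal _ (laplaceDensity_nonneg 0 b hb x)]

lemma laplaceMeasure_ne_zero {b : ℝ} (hb : 0 < b) : laplaceMeasure 0 b ≠ 0 := by
  intro h
  have ht : |(0:ℝ)| * b < 1 := by simpa using zero_lt_one
  have h1 := laplaceMeasure_integral_exp hb ht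
  rw [h] at h1
  simp at h1

lemma mgf_of_laplace {Ω : Type*} [MeasurableSpace Ω] {P : Measure Ω} {Z : Ω → ℝ} {b t : ℝ}
    (hb : 0 < b) (ht : |t| * b < 1) (hZ : Measurable Z) (hlawZ : P.map Z = laplaceMeasure 0 b) :
    mgf Z P t = 1 / (1 - t ^ 2 * b ^ 2) := by
  have hmeas : AEStronglyMeasurable (fun x => Real.exp (t * x)) (P.map Z) :=
    (Real.measurable_exp.comp (measurable_const.mul measurable_id)).aestronglyMeasurable
  rw [mgf, ← integral_map hZ.aemeasurable hmeas, hlawZ, laplaceMeasure_integral_exp hb ht]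

lemma integrable_exp_of_laplace {Ω : Type*} [MeasurableSpace Ω] {P : Measure Ω} {Z : Ω → ℝ}
    {b t : ℝ} (hb : 0 < b) (ht : |t| * b < 1) (hZ : Measurable Z)
    (hlawZ : P.map Z = laplaceMeasure 0 b) :
    Integrable (fun ω => Real.exp (t * Z ω)) P := by
  have h := laplaceMeasure_integrable_exp hb ht
  rw [← hlawZ] at h
  have hmeas : AEStronglyMeasurable (fun x => Real.exp (t * x)) (P.map Z) :=
    (Real.measurable_exp.comp (measurable_const.mul measurable_id)).aestronglyMeasurable
  exact (integrable_map_measure hmeas hZ.aemeasurable).mp h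

lemma one_div_one_sub_le_exp {x : ℝ} (h0 : 0 ≤ x) (h1 : x ≤ 1 / 2) :
    1 / (1 - x) ≤ Real.exp (2 * x) := by
  rw [div_le_iff₀ (by linarith)]
  nlinarith [Real.add_one_le_exp (2 * x), Real.exp_pos (2 * x)]

lemma laplaceMeasure_map_neg {b : ℝ} (hb : 0 < b) :
    (laplaceMeasure 0 b).map (fun x => -x) = laplaceMeasure 0 b := by
  have hdm : Measurable fun x => ENNReal.ofReal (laplaceDensity 0 b x) :=
    (measurable_laplaceDensity 0 b).ennreal_ofReal
  ext s hs
  rw [Measure.map_apply measurable_neg hs, laplaceMeasure, withDensity_apply _ (measurable_neg hs),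
    withDensity_apply _ hs]
  have hmp : MeasurePreserving (fun x : ℝ => -x) volume volume :=
    ⟨measurable_neg, Measure.map_neg_eq_self volume⟩
  have hemb : MeasurableEmbedding (fun x : ℝ => -x) := (Homeomorph.neg ℝ).measurableEmbedding
  rw [← hmp.setLIntegral_comp_preimage_emb hemb (fun x => ENNReal.ofReal (laplaceDensity 0 b x)) s]
  refine setLIntegral_congr_fun (hemb.measurable hs) (fun x _ => ?_)
  unfold laplaceDensity
  rw [sub_zero, sub_zero, abs_neg]

lemma iIndepFun_of_ae_eq {Ω : Type*} [MeasurableSpace Ω] {μ : Measure Ω} {N : ℕ}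
    {f g : Fin N → Ω → ℝ} (h : iIndepFun f μ)
    (hfg : ∀ i, f i =ᵐ[μ] g i) : iIndepFun g μ := by
  rw [iIndepFun_iff] at h ⊢
  intro s f' H
  have key : ∀ i : Fin N, ∃ A : Set ℝ, MeasurableSet A ∧ (i ∈ s → g i ⁻¹' A = f' i) := by
    intro i
    by_cases hi : i ∈ s
    · obtain ⟨A, hA, hA'⟩ := H i hi
      exact ⟨A, hA, fun _ => hA'⟩
    · exact ⟨∅, MeasurableSet.empty, fun h' => absurd h' hi⟩
  choose A hA hA' using key
  have hae : ∀ᵐ x ∂μ, ∀ i, f i x = g i x := MeasureTheory.ae_all_iff.mpr hfg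
  have h1 := h s (f' := fun i => f i ⁻¹' A i) (fun i hi => ⟨A i, hA i, rfl⟩)
  have heq : ∀ i ∈ s, μ (f i ⁻¹' A i) = μ (f' i) := by
    intro i hi
    apply measure_congr
    filter_upwards [hae] with x hx
    refine eq_iff_iff.mpr ?_
    rw [← hA' i hi]
    show f i x ∈ A i ↔ g i x ∈ A i
    rw [hx i]
  have hinter : μ (⋂ i ∈ s, f' i) = μ (⋂ i ∈ s, f i ⁻¹' A i) := by
    apply measure_congr
    filter_upwards [hae] with x hx
    refine eq_iff_iff.mpr ?_
    show x ∈ (⋂ i ∈ s, f' i) ↔ x ∈ ⋂ i ∈ s, f i ⁻¹' A i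
    simp only [Set.mem_iInter]
    refine forall₂_congr fun i hi => ?_
    rw [← hA' i hi]
    show g i x ∈ A i ↔ f i x ∈ A i
    rw [hx i]
  rw [hinter, h1]
  exact Finset.prod_congr rfl fun i hi => heq i hi

lemma laplace_chernoff {Ω : Type*} [MeasurableSpace Ω] (P : Measure Ω) [IsProbabilityMeasure P]
    {N : ℕ} (Z : Fin N → Ω → ℝ) (b : Fin N → ℝ) (hb : ∀ i, 0 < b i)
    (hmeas : ∀ i, Measurable (Z i))
    (hindep : iIndepFun Z P)
    (hlaw : ∀ i, P.map (Z i) = laplaceMeasure 0 (b i))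
    {t : ℝ} (ht : 0 < t) (htb : ∀ i, (t * b i) ^ 2 ≤ 1 / 2) (ε : ℝ) :
    (P {x | ε ≤ ∑ i, Z i x}).toReal ≤ Real.exp (-t * ε + 2 * t ^ 2 * ∑ i, (b i) ^ 2) := by
  have habs : ∀ i, |t| * b i < 1 := by
    intro i
    have h1 := htb i
    have h2 := hb i
    have h3 := mul_pos ht h2
    rw [abs_of_pos ht]
    nlinarith
  have hint : ∀ i ∈ Finset.univ, Integrable (fun ω => Real.exp (t * Z i ω)) P :=
    fun i _ => integrable_exp_of_laplace (hb i) (habs i) (hmeas i) (hlaw i)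
  have hints := hindep.integrable_exp_mul_sum hmeas hint
  have hset : {x | ε ≤ ∑ i, Z i x} = {x | ε ≤ (∑ i, Z i) x} := by
    ext x; simp [Finset.sum_apply]
  rw [hset]
  refine (measure_ge_le_exp_mul_mgf (X := ∑ i, Z i) (μ := P) ε ht.le hints).trans ?_
  rw [hindep.mgf_sum hmeas, Real.exp_add]
  have hprod : ∏ i, mgf (Z i) P t ≤ ∏ i, Real.exp (2 * (t * b i) ^ 2) := by
    refine Finset.prod_le_prod (fun i _ => mgf_nonneg) (fun i _ => ?_)
    rw [mgf_of_laplace (hb i) (habs i) (hmeas i) (hlaw i)]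
    have h := one_div_one_sub_le_exp (x := (t * b i) ^ 2) (by positivity) (htb i)
    rw [mul_pow] at h
    refine h.trans_eq ?_
    ring_nf
  have hprodeq : (∏ i, Real.exp (2 * (t * b i) ^ 2)) =
      Real.exp (2 * t ^ 2 * ∑ i, (b i) ^ 2) := by
    rw [← Real.exp_sum]
    congr 1
    rw [Finset.mul_sum]
    exact Finset.sum_congr rfl fun i _ => by ring
  exact mul_le_mul_of_nonneg_left (hprod.trans_eq hprodeq) (Real.exp_pos _).le

/-- Concentration of sums of independent centered Laplace random variables:
if `Y i ∼ Laplace(0, b i)`, `B = Σ b i²`, and `ω ∈ (0, e⁻²]` satisfies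
`ln(1/ω) · max_i b i ≤ √B`, then `P(|Σ Y i| ≥ ln(1/ω) √(8B)) ≤ ω`. -/
theorem laplace_sum_concentration {Ω : Type*} [MeasurableSpace Ω]
    (P : Measure Ω) [IsProbabilityMeasure P]
    (N : ℕ) (hN : 0 < N) (Y : Fin N → Ω → ℝ) (b : Fin N → ℝ) (hb : ∀ i, 0 < b i)
    (hindep : iIndepFun Y P)
    (hlaw : ∀ i, P.map (Y i) = laplaceMeasure 0 (b i))
    (B : ℝ) (hB : B = ∑ i, (b i) ^ 2)
    (ω : ℝ) (hω : 0 < ω) (hω' : ω ≤ Real.exp (-2))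
    (hmax : Real.log (1 / ω) *
        Finset.univ.sup' (Finset.univ_nonempty_iff.mpr (Fin.pos_iff_nonempty.mp hN)) b
      ≤ Real.sqrt B) :
    P {x | Real.log (1 / ω) * Real.sqrt (8 * B) ≤ |∑ i, Y i x|} ≤ ENNReal.ofReal ω := by
  -- measurable modifications
  have hY : ∀ i, AEMeasurable (Y i) P := by
    intro i
    by_contra h
    exact laplaceMeasure_ne_zero (hb i)
      ((hlaw i).symm.trans (Measure.map_of_not_aemeasurable h))
  set Z : Fin N → Ω → ℝ := fun i => (hY i).mk (Y i) with hZdef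
  have hZmeas : ∀ i, Measurable (Z i) := fun i => (hY i).measurable_mk
  have hZeq : ∀ i, Y i =ᵐ[P] Z i := fun i => (hY i).ae_eq_mk
  have hZindep := iIndepFun_of_ae_eq hindep hZeq
  have hZlaw : ∀ i, P.map (Z i) = laplaceMeasure 0 (b i) := by
    intro i
    rw [← Measure.map_congr (hZeq i)]
    exact hlaw i
  -- constants
  set L := Real.log (1 / ω) with hLdef
  have hL2 : 2 ≤ L := by
    rw [hLdef, Real.le_log_iff_exp_le (by positivity)]
    calc Real.exp 2 = 1 / Real.exp (-2) := by
          rw [one_div, ← Real.exp_neg, neg_neg]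
      _ ≤ 1 / ω := by
          apply one_div_le_one_div_of_le hω hω'
  have hLpos : 0 < L := lt_of_lt_of_le two_pos hL2
  have hωeq : Real.exp (-L) = ω := by
    rw [hLdef, one_div, Real.log_inv, neg_neg, Real.exp_log hω]
  have hNE : Nonempty (Fin N) := Fin.pos_iff_nonempty.mp hN
  have hBpos : 0 < B := by
    rw [hB]
    exact Finset.sum_pos (fun i _ => pow_pos (hb i) 2) Finset.univ_nonempty
  set t := L / Real.sqrt (2 * B) with htdef
  have hsq : 0 < Real.sqrt (2 * B) := Real.sqrt_pos.mpr (by linarith)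
  have ht : 0 < t := div_pos hLpos hsq
  have htb : ∀ i, (t * b i) ^ 2 ≤ 1 / 2 := by
    intro i
    have hble : b i ≤ Finset.univ.sup'
        (Finset.univ_nonempty_iff.mpr (Fin.pos_iff_nonempty.mp hN)) b :=
      Finset.le_sup' b (Finset.mem_univ i)
    have h1 : L * b i ≤ Real.sqrt B :=
      le_trans (mul_le_mul_of_nonneg_left hble hLpos.le) hmax
    have h3 : 0 ≤ L * b i := mul_nonneg hLpos.le (hb i).le
    have h4 : (L * b i) ^ 2 ≤ B := by
      have := pow_le_pow_left₀ h3 h1 2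
      rwa [Real.sq_sqrt hBpos.le] at this
    have h2 : t * b i = (L * b i) / Real.sqrt (2 * B) := by rw [htdef]; ring
    rw [h2, div_pow, Real.sq_sqrt (by linarith : (0:ℝ) ≤ 2 * B),
      div_le_div_iff₀ (by linarith) (by norm_num : (0:ℝ) < 2)]
    nlinarith
  set ε := L * Real.sqrt (8 * B) with hεdef
  have h8 : Real.sqrt (8 * B) = 2 * Real.sqrt (2 * B) := by
    rw [show (8:ℝ) * B = 4 * (2 * B) by ring,
      Real.sqrt_mul (by norm_num : (0:ℝ) ≤ 4),
      show Real.sqrt 4 = 2 by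
        rw [show (4:ℝ) = 2 ^ 2 by norm_num, Real.sqrt_sq (by norm_num : (0:ℝ) ≤ 2)]]
  have htε : t * ε = 2 * L ^ 2 := by
    rw [htdef, hεdef, h8]
    field_simp
  have hexp : -t * ε + 2 * t ^ 2 * ∑ i, (b i) ^ 2 = -(L ^ 2) := by
    rw [← hB]
    have ht2 : t ^ 2 = L ^ 2 / (2 * B) := by
      rw [htdef, div_pow, Real.sq_sqrt (by linarith : (0:ℝ) ≤ 2 * B)]
    calc -t * ε + 2 * t ^ 2 * B = -(t * ε) + 2 * (L ^ 2 / (2 * B)) * B := by rw [ht2]; ring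
      _ = -(2 * L ^ 2) + L ^ 2 := by
          rw [htε]
          have hBne : (2:ℝ) * B ≠ 0 := by positivity
          field_simp
      _ = -(L ^ 2) := by ring
  -- the two one-sided Chernoff bounds
  have hbound1 := laplace_chernoff P Z b hb hZmeas hZindep hZlaw ht htb ε
  set W : Fin N → Ω → ℝ := fun i x => -(Z i x) with hWdef
  have hWmeas : ∀ i, Measurable (W i) := fun i => (hZmeas i).neg
  have hWindep : iIndepFun W P :=
    hZindep.comp (fun _ => fun y : ℝ => -y) (fun _ => measurable_neg)
  have hWlaw : ∀ i, P.map (W i) = laplaceMeasure 0 (b i) := by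
    intro i
    have hcomp : W i = (fun y : ℝ => -y) ∘ (Z i) := rfl
    rw [hcomp, ← Measure.map_map measurable_neg (hZmeas i), hZlaw i]
    exact laplaceMeasure_map_neg (hb i)
  have hbound2 := laplace_chernoff P W b hb hWmeas hWindep hWlaw ht htb ε
  -- event comparison
  have haeY : ∀ᵐ x ∂P, ∀ i, Y i x = Z i x := ae_all_iff.mpr hZeq
  have hev : P {x | ε ≤ |∑ i, Y i x|} = P {x | ε ≤ |∑ i, Z i x|} := by
    apply measure_congr
    filter_upwards [haeY] with x hx
    refine eq_iff_iff.mpr ?_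
    show ε ≤ |∑ i, Y i x| ↔ ε ≤ |∑ i, Z i x|
    rw [Finset.sum_congr rfl fun i _ => hx i]
  have hsub : {x | ε ≤ |∑ i, Z i x|} ⊆ {x | ε ≤ ∑ i, Z i x} ∪ {x | ε ≤ ∑ i, W i x} := by
    intro x hx
    have hx' : ε ≤ |∑ i, Z i x| := hx
    rcases abs_cases (∑ i, Z i x) with ⟨h1, _⟩ | ⟨h1, _⟩
    · left
      show ε ≤ ∑ i, Z i x
      rw [← h1]
      exact hx'
    · right
      show ε ≤ ∑ i, W i x
      have : ∑ i, W i x = -(∑ i, Z i x) := by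
        rw [hWdef, ← Finset.sum_neg_distrib]
      rw [this, ← h1]
      exact hx'
  have hle : ∀ {E : Set Ω}, (P E).toReal ≤ Real.exp (-t * ε + 2 * t ^ 2 * ∑ i, (b i) ^ 2) →
      P E ≤ ENNReal.ofReal (Real.exp (-(L ^ 2))) := by
    intro E hE
    rw [← ENNReal.ofReal_toReal (measure_ne_top P E)]
    exact ENNReal.ofReal_le_ofReal (hE.trans_eq (by rw [hexp]))
  calc P {x | ε ≤ |∑ i, Y i x|} = P {x | ε ≤ |∑ i, Z i x|} := hev
    _ ≤ P ({x | ε ≤ ∑ i, Z i x} ∪ {x | ε ≤ ∑ i, W i x}) := measure_mono hsub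
    _ ≤ P {x | ε ≤ ∑ i, Z i x} + P {x | ε ≤ ∑ i, W i x} := measure_union_le _ _
    _ ≤ ENNReal.ofReal (Real.exp (-(L ^ 2))) + ENNReal.ofReal (Real.exp (-(L ^ 2))) :=
        add_le_add (hle hbound1) (hle hbound2)
    _ = ENNReal.ofReal (2 * Real.exp (-(L ^ 2))) := by
        rw [← ENNReal.ofReal_add (Real.exp_pos _).le (Real.exp_pos _).le]
        congr 1
        ring
    _ ≤ ENNReal.ofReal ω := by
        apply ENNReal.ofReal_le_ofReal
        rw [← hωeq]
        have h5 : L ^ 2 - L + 1 ≤ Real.exp (L ^ 2 - L) := Real.add_one_le_exp _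
        have h6 : 2 ≤ Real.exp (L ^ 2 - L) := by nlinarith
        calc 2 * Real.exp (-(L ^ 2)) ≤ Real.exp (L ^ 2 - L) * Real.exp (-(L ^ 2)) := by
              nlinarith [Real.exp_pos (-(L ^ 2))]
          _ = Real.exp (-L) := by rw [← Real.exp_add]; ring_nf
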